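/- arXiv:1409.8648 — 2 statements merged into one kernel-verified Lean document; each statement's English description precedes it below -/
import Mathlib

section
/- Under the standing assumptions on A, F, h, g, let K ⊆ ℝ^N be a proper cone and λ ∈ int(K*). For each (x,t) ∈ ℝ^n × (0,T), the set S_{x,t} := closure{C_{x,t}[α] : α ∈ 𝒜} ⊆ ℝ^N is nonempty and compact, and there exists a point ξ ∈ S_{x,t} such that λ·ξ = inf_{α ∈ 𝒜} λ·C_{x,t}[α] and ξ is a Pareto minimal of S_{x,t} with respect to the ordering ≤_K. In particular, for each λ ∈ int(K*) there exists a vectorial value map u^λ : ℝ^n × (0,T) → ℝ^N such that u^λ(x,t) ∈ S_{x,t} is a Pareto minimal of S_{x,t} and λ·u^λ(x,t) = inf_{α ∈ 𝒜} λ·C_{x,t}[α] for every (x,t). -/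
open MeasureTheory Set
open scoped InnerProductSpace

noncomputable section

/-- Admissible controls: measurable maps taking values in `A` a.e. on `(0,T)`. -/
def IsAdmissible {m : ℕ} (T : ℝ) (A : Set (EuclideanSpace ℝ (Fin m)))
    (α : ℝ → EuclideanSpace ℝ (Fin m)) : Prop :=
  Measurable α ∧ ∀ᵐ s ∂(volume.restrict (Set.Ioo 0 T)), α s ∈ A

/-- `χ` is the controlled trajectory on `[t,T]` started at `x` with control `α`:
a continuous solution of the integral equation `χ(s) = x + ∫_t^s F(χ(r), α(r)) dr`. -/
def IsTrajectory {n m : ℕ} (T : ℝ)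
    (F : EuclideanSpace ℝ (Fin n) → EuclideanSpace ℝ (Fin m) → EuclideanSpace ℝ (Fin n))
    (x : EuclideanSpace ℝ (Fin n)) (t : ℝ) (α : ℝ → EuclideanSpace ℝ (Fin m))
    (χ : ℝ → EuclideanSpace ℝ (Fin n)) : Prop :=
  ContinuousOn χ (Set.Icc t T) ∧
    ∀ s ∈ Set.Icc t T, χ s = x + ∫ r in t..s, F (χ r) (α r)

/-- The vectorial cost `C_{x,t}[α] = g(χ(T)) + ∫_t^T h(χ(s), α(s)) ds`. -/
def vectCost {n m N : ℕ} (T : ℝ)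
    (h : EuclideanSpace ℝ (Fin n) → EuclideanSpace ℝ (Fin m) → EuclideanSpace ℝ (Fin N))
    (g : EuclideanSpace ℝ (Fin n) → EuclideanSpace ℝ (Fin N))
    (t : ℝ) (α : ℝ → EuclideanSpace ℝ (Fin m)) (χ : ℝ → EuclideanSpace ℝ (Fin n)) :
    EuclideanSpace ℝ (Fin N) :=
  g (χ T) + ∫ s in t..T, h (χ s) (α s)

/-- The set of achievable vectorial costs `{C_{x,t}[α] : α ∈ 𝒜}`. -/
def costSet {n m N : ℕ} (T : ℝ) (A : Set (EuclideanSpace ℝ (Fin m)))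
    (F : EuclideanSpace ℝ (Fin n) → EuclideanSpace ℝ (Fin m) → EuclideanSpace ℝ (Fin n))
    (h : EuclideanSpace ℝ (Fin n) → EuclideanSpace ℝ (Fin m) → EuclideanSpace ℝ (Fin N))
    (g : EuclideanSpace ℝ (Fin n) → EuclideanSpace ℝ (Fin N))
    (x : EuclideanSpace ℝ (Fin n)) (t : ℝ) : Set (EuclideanSpace ℝ (Fin N)) :=
  {c | ∃ (α : ℝ → EuclideanSpace ℝ (Fin m)) (χ : ℝ → EuclideanSpace ℝ (Fin n)),
    IsAdmissible T A α ∧ IsTrajectory T F x t α χ ∧ c = vectCost T h g t α χ}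

/-- Under the standing assumptions, for a proper cone `K ⊆ ℝ^N` and
`λ ∈ int(K*)`: for each `(x,t) ∈ ℝ^n × (0,T)` the set `S_{x,t} = closure{C_{x,t}[α]}` is
nonempty and compact, and contains a point `ξ` with `λ·ξ = inf_α λ·C_{x,t}[α]` which is a
Pareto minimal of `S_{x,t}` w.r.t. `≤_K`; in particular there is a vectorial value map
`u^λ` realising such Pareto minimals together with the scalarised infimum at every
`(x,t)`. -/
theorem exists_vectorial_value_map
    (n m N : ℕ) (T : ℝ) (hT : 0 < T)
    (A : Set (EuclideanSpace ℝ (Fin m))) (hAne : A.Nonempty) (hAcpt : IsCompact A)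
    (F : EuclideanSpace ℝ (Fin n) → EuclideanSpace ℝ (Fin m) → EuclideanSpace ℝ (Fin n))
    (h : EuclideanSpace ℝ (Fin n) → EuclideanSpace ℝ (Fin m) → EuclideanSpace ℝ (Fin N))
    (g : EuclideanSpace ℝ (Fin n) → EuclideanSpace ℝ (Fin N))
    (hFcont : ContinuousOn (fun p => F p.1 p.2) (Set.univ ×ˢ A))
    (hhcont : ContinuousOn (fun p => h p.1 p.2) (Set.univ ×ˢ A))
    (hgcont : Continuous g)
    (C : ℝ) (hCpos : 0 < C)
    (hFbd : ∀ x, ∀ a ∈ A, ‖F x a‖ ≤ C)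
    (hhbd : ∀ x, ∀ a ∈ A, ‖h x a‖ ≤ C)
    (hgbd : ∀ x, ‖g x‖ ≤ C)
    (hFlip : ∀ x y, ∀ a ∈ A, ‖F x a - F y a‖ ≤ C * ‖x - y‖)
    (hhlip : ∀ x y, ∀ a ∈ A, ‖h x a - h y a‖ ≤ C * ‖x - y‖)
    (hglip : ∀ x y, ‖g x - g y‖ ≤ C * ‖x - y‖)
    (K : Set (EuclideanSpace ℝ (Fin N)))
    (hclosed : IsClosed K) (hconv : Convex ℝ K)
    (hcone : ∀ t : ℝ, 0 ≤ t → ∀ ζ ∈ K, t • ζ ∈ K)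
    (hintK : (interior K).Nonempty)
    (hnoline : ∀ ζ ∈ K, -ζ ∈ K → ζ = 0)
    (lam : EuclideanSpace ℝ (Fin N))
    (hlam : lam ∈ interior {l : EuclideanSpace ℝ (Fin N) | ∀ ζ ∈ K, 0 ≤ ⟪l, ζ⟫_ℝ}) :
    (∀ x : EuclideanSpace ℝ (Fin n), ∀ t ∈ Set.Ioo (0:ℝ) T,
      (closure (costSet T A F h g x t)).Nonempty ∧
      IsCompact (closure (costSet T A F h g x t)) ∧
      ∃ ξ ∈ closure (costSet T A F h g x t),
        ⟪lam, ξ⟫_ℝ = sInf {r : ℝ | ∃ c ∈ costSet T A F h g x t, r = ⟪lam, c⟫_ℝ} ∧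
        ∀ η ∈ closure (costSet T A F h g x t), ξ - η ∈ K → η = ξ) ∧
    ∃ u : EuclideanSpace ℝ (Fin n) → ℝ → EuclideanSpace ℝ (Fin N),
      ∀ x : EuclideanSpace ℝ (Fin n), ∀ t ∈ Set.Ioo (0:ℝ) T,
        u x t ∈ closure (costSet T A F h g x t) ∧
        (∀ η ∈ closure (costSet T A F h g x t), u x t - η ∈ K → η = u x t) ∧
        ⟪lam, u x t⟫_ℝ = sInf {r : ℝ | ∃ c ∈ costSet T A F h g x t, r = ⟪lam, c⟫_ℝ} := by
  classical
  obtain ⟨a₀, ha₀⟩ := hAne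
  have hFlipw : LipschitzWith ⟨C, hCpos.le⟩ (fun y => F y a₀) :=
    LipschitzWith.of_dist_le_mul fun y z => by
      rw [dist_eq_norm, dist_eq_norm]; exact hFlip y z a₀ ha₀
  have hFc : Continuous (fun y => F y a₀) := hFlipw.continuous
  have main : ∀ x : EuclideanSpace ℝ (Fin n), ∀ t ∈ Set.Ioo (0:ℝ) T,
      (closure (costSet T A F h g x t)).Nonempty ∧
      IsCompact (closure (costSet T A F h g x t)) ∧
      ∃ ξ ∈ closure (costSet T A F h g x t),
        ⟪lam, ξ⟫_ℝ = sInf {r : ℝ | ∃ c ∈ costSet T A F h g x t, r = ⟪lam, c⟫_ℝ} ∧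
        ∀ η ∈ closure (costSet T A F h g x t), ξ - η ∈ K → η = ξ := by
    intro x t ht
    obtain ⟨ht0, htT⟩ := ht
    -- existence of a trajectory for the constant control a₀
    have hpl : IsPicardLindelof (fun _ y => F y a₀) (tmin := t) (tmax := T) ⟨t, le_refl t, htT.le⟩ x
        ⟨C * (T - t), mul_nonneg hCpos.le (by linarith)⟩ 0 ⟨C, hCpos.le⟩ ⟨C, hCpos.le⟩ :=
      { lipschitzOnWith := fun s _ => hFlipw.lipschitzOnWith
        continuousOn := fun y _ => continuousOn_const
        norm_le := fun s _ y _ => hFbd y a₀ ha₀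
        mul_max_le := by
          simp only [NNReal.coe_mk, NNReal.coe_zero, sub_self, sub_zero]
          rw [max_eq_left (by linarith : (0:ℝ) ≤ T - t)]
          exact le_rfl }
    obtain ⟨f, hft, hfd⟩ := hpl.exists_eq_forall_mem_Icc_hasDerivWithinAt₀
    replace hft : f t = x := hft
    have hfc : ContinuousOn f (Set.Icc t T) := fun r hr => (hfd r hr).continuousWithinAt
    have key : ∀ s ∈ Set.Icc t T, ∫ r in t..s, F (f r) a₀ = f s - f t := by
      intro s hs
      refine intervalIntegral.integral_eq_sub_of_hasDeriv_right_of_le hs.1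
        (hfc.mono (Set.Icc_subset_Icc le_rfl hs.2)) (fun r hr => ?_) ?_
      · have hrT : r ∈ Set.Ioo t T := ⟨hr.1, lt_of_lt_of_le hr.2 hs.2⟩
        exact ((hfd r (Set.Ioo_subset_Icc_self hrT)).hasDerivAt
          (Icc_mem_nhds hrT.1 hrT.2)).hasDerivWithinAt
      · refine ContinuousOn.intervalIntegrable ?_
        refine hFc.comp_continuousOn (hfc.mono ?_)
        rw [Set.uIcc_of_le hs.1]
        exact Set.Icc_subset_Icc le_rfl hs.2
    have htraj : IsTrajectory T F x t (fun _ => a₀) f :=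
      ⟨hfc, fun s hs => by rw [key s hs, hft]; abel⟩
    have hne : (costSet T A F h g x t).Nonempty :=
      ⟨vectCost T h g t (fun _ => a₀) f, fun _ => a₀, f,
        ⟨measurable_const, Filter.Eventually.of_forall fun _ => ha₀⟩, htraj, rfl⟩
    -- boundedness of the cost set
    have hsub : costSet T A F h g x t ⊆ Metric.closedBall 0 (C + C * |T - t|) := by
      rintro c ⟨α, χ, ⟨hαm, hαA⟩, hχ, rfl⟩
      rw [Metric.mem_closedBall, dist_zero_right]
      have hbd : ‖∫ s in t..T, h (χ s) (α s)‖ ≤ C * |T - t| := by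
        refine intervalIntegral.norm_integral_le_of_norm_le_const_ae ?_
        have hA' : ∀ᵐ s : ℝ ∂volume, s ∈ Set.Ioo (0:ℝ) T → α s ∈ A :=
          (ae_restrict_iff' measurableSet_Ioo).mp hαA
        have hTne : ∀ᵐ s : ℝ ∂volume, s ≠ T := by
          have : volume ({T} : Set ℝ) = 0 := measure_singleton T
          filter_upwards [compl_mem_ae_iff.mpr this] with s hs
          simpa using hs
        filter_upwards [hA', hTne] with s hsA hsT hs
        rw [Set.uIoc_of_le htT.le] at hs
        have : α s ∈ A := hsA ⟨lt_trans ht0 hs.1, lt_of_le_of_ne hs.2 hsT⟩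
        exact hhbd _ _ this
      calc ‖vectCost T h g t α χ‖ ≤ ‖g (χ T)‖ + ‖∫ s in t..T, h (χ s) (α s)‖ :=
            norm_add_le _ _
        _ ≤ C + C * |T - t| := add_le_add (hgbd _) hbd
    have hnecl : (closure (costSet T A F h g x t)).Nonempty :=
      hne.mono subset_closure
    have hcptcl : IsCompact (closure (costSet T A F h g x t)) :=
      IsCompact.of_isClosed_subset (isCompact_closedBall 0 (C + C * |T - t|))
        isClosed_closure (closure_minimal hsub Metric.isClosed_closedBall)
    -- minimizer of the scalarised cost on the compact closure
    have hφ : Continuous (fun c : EuclideanSpace ℝ (Fin N) => ⟪lam, c⟫_ℝ) :=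
      Continuous.inner continuous_const continuous_id
    obtain ⟨ξ, hξmem, hξmin⟩ := hcptcl.exists_isMinOn hnecl hφ.continuousOn
    refine ⟨hnecl, hcptcl, ξ, hξmem, ?_, ?_⟩
    · -- the scalarised value equals the infimum
      set Rset := {r : ℝ | ∃ c ∈ costSet T A F h g x t, r = ⟪lam, c⟫_ℝ} with hRset
      have hRim : Rset = (fun c => ⟪lam, c⟫_ℝ) '' costSet T A F h g x t := by
        ext r
        simp only [hRset, Set.mem_setOf_eq, Set.mem_image]
        constructor
        · rintro ⟨c, hc, rfl⟩; exact ⟨c, hc, rfl⟩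
        · rintro ⟨c, hc, rfl⟩; exact ⟨c, hc, rfl⟩
      have hlb : ∀ r ∈ Rset, ⟪lam, ξ⟫_ℝ ≤ r := by
        rintro r ⟨c, hc, rfl⟩
        exact hξmin (subset_closure hc)
      refine le_antisymm ?_ ?_
      · obtain ⟨c₀, hc₀⟩ := hne
        exact le_csInf ⟨⟪lam, c₀⟫_ℝ, c₀, hc₀, rfl⟩ hlb
      · have h1 : ⟪lam, ξ⟫_ℝ ∈ closure Rset := by
          rw [hRim]
          exact image_closure_subset_closure_image hφ ⟨ξ, hξmem, rfl⟩
        have h2 : closure Rset ⊆ Set.Ici (sInf Rset) :=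
          closure_minimal (fun r hr => csInf_le ⟨⟪lam, ξ⟫_ℝ, hlb⟩ hr) isClosed_Ici
        exact h2 h1
    · -- Pareto minimality
      intro η hη hKmem
      have h1 : 0 ≤ ⟪lam, ξ - η⟫_ℝ := interior_subset hlam _ hKmem
      have h2 : ⟪lam, ξ⟫_ℝ ≤ ⟪lam, η⟫_ℝ := hξmin hη
      have hzero : ⟪lam, ξ - η⟫_ℝ = 0 := by
        rw [inner_sub_right] at h1 ⊢; linarith
      by_contra hne'
      have hζ : ξ - η ≠ 0 := fun e => hne' (by
        have := sub_eq_zero.mp e; exact this.symm)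
      have hζpos : 0 < ‖ξ - η‖ := norm_pos_iff.mpr hζ
      obtain ⟨ε, hε, hball⟩ := Metric.mem_nhds_iff.mp (mem_interior_iff_mem_nhds.mp hlam)
      set ζ := ξ - η
      set l' := lam - (ε / (2 * ‖ζ‖)) • ζ with hl'
      have hl'mem : l' ∈ Metric.ball lam ε := by
        rw [Metric.mem_ball, dist_eq_norm, hl']
        have : lam - (ε / (2 * ‖ζ‖)) • ζ - lam = -((ε / (2 * ‖ζ‖)) • ζ) := by abel
        rw [this, norm_neg, norm_smul, Real.norm_eq_abs,
          abs_of_pos (by positivity : (0:ℝ) < ε / (2 * ‖ζ‖))]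
        rw [div_mul_eq_mul_div, mul_comm (2:ℝ) ‖ζ‖, ← div_div,
          mul_div_assoc, div_self hζpos.ne', mul_one]
        linarith
      have h3 : 0 ≤ ⟪l', ζ⟫_ℝ := hball hl'mem ζ hKmem
      rw [hl', inner_sub_left, real_inner_smul_left, hzero, real_inner_self_eq_norm_sq] at h3
      have : 0 < ε / (2 * ‖ζ‖) * (‖ζ‖ * ‖ζ‖) := by positivity
      nlinarith
  have exi : ∀ (x : EuclideanSpace ℝ (Fin n)) (t : ℝ), t ∈ Set.Ioo (0:ℝ) T →
      ∃ ξ, ξ ∈ closure (costSet T A F h g x t) ∧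
        (⟪lam, ξ⟫_ℝ = sInf {r : ℝ | ∃ c ∈ costSet T A F h g x t, r = ⟪lam, c⟫_ℝ} ∧
        ∀ η ∈ closure (costSet T A F h g x t), ξ - η ∈ K → η = ξ) :=
    fun x t ht => (main x t ht).2.2
  refine ⟨main, fun x t => if ht : t ∈ Set.Ioo (0:ℝ) T then (exi x t ht).choose else 0,
    fun x t ht => ?_⟩
  simp only [dif_pos ht]
  obtain ⟨h1, h2, h3⟩ := (exi x t ht).choose_spec
  exact ⟨h1, h3, h2⟩
end
end

section
/- Under the standing assumptions on A, F, h, g, fix λ ∈ ℝ^N and let v^λ(x,t) := inf_{α ∈ 𝒜} λ·C_{x,t}[α]. Then v^λ is a viscosity subsolution of v_t + H^λ(x, Dv) = 0 in ℝ^n × (0,T), where H^λ(x,p) := min_{a ∈ A} { F(x,a)·p + λ·h(x,a) }. That is: whenever ψ : ℝ^n × ℝ → ℝ is twice continuously differentiable, (x₀,t₀) ∈ ℝ^n × (0,T), and v^λ − ψ ≤ 0 = (v^λ − ψ)(x₀,t₀) on some ball around (x₀,t₀), then ∂_t ψ(x₀,t₀) + min_{a ∈ A} { F(x₀,a)·D_x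 ψ(x₀,t₀) + λ·h(x₀,a) } ≥ 0. -/
open MeasureTheory Set
open scoped InnerProductSpace

noncomputable section

/-- The scalar value function `v^λ(x,t) = inf_{α ∈ 𝒜} λ·C_{x,t}[α]`, the infimum being
taken over admissible controls and associated trajectories. -/
def scalarValue {n m N : ℕ} (T : ℝ) (A : Set (EuclideanSpace ℝ (Fin m)))
    (F : EuclideanSpace ℝ (Fin n) → EuclideanSpace ℝ (Fin m) → EuclideanSpace ℝ (Fin n))
    (h : EuclideanSpace ℝ (Fin n) → EuclideanSpace ℝ (Fin m) → EuclideanSpace ℝ (Fin N))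
    (g : EuclideanSpace ℝ (Fin n) → EuclideanSpace ℝ (Fin N))
    (lam : EuclideanSpace ℝ (Fin N))
    (x : EuclideanSpace ℝ (Fin n)) (t : ℝ) : ℝ :=
  sInf {r : ℝ | ∃ (α : ℝ → EuclideanSpace ℝ (Fin m)) (χ : ℝ → EuclideanSpace ℝ (Fin n)),
    IsAdmissible T A α ∧ IsTrajectory T F x t α χ ∧ r = ⟪lam, vectCost T h g t α χ⟫_ℝ}

variable {n m k : ℕ}

lemma cont_apply {G : EuclideanSpace ℝ (Fin n) → EuclideanSpace ℝ (Fin m) → EuclideanSpace ℝ (Fin k)}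
    {A : Set (EuclideanSpace ℝ (Fin m))}
    (hG : ContinuousOn (fun p => G p.1 p.2) (Set.univ ×ˢ A)) {a} (ha : a ∈ A) :
    Continuous (fun x => G x a) := by
  have hc : Continuous (fun x : EuclideanSpace ℝ (Fin n) => ((x, a) : EuclideanSpace ℝ (Fin n) × EuclideanSpace ℝ (Fin m))) := by continuity
  exact hG.comp_continuous hc (fun x => ⟨mem_univ _, ha⟩)

lemma aesm_comp {A : Set (EuclideanSpace ℝ (Fin m))} (hA : IsClosed A)
    {G : EuclideanSpace ℝ (Fin n) → EuclideanSpace ℝ (Fin m) → EuclideanSpace ℝ (Fin k)}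
    (hG : ContinuousOn (fun p => G p.1 p.2) (Set.univ ×ˢ A))
    {χ : ℝ → EuclideanSpace ℝ (Fin n)} {α : ℝ → EuclideanSpace ℝ (Fin m)}
    {μ : Measure ℝ}
    (hχ : AEMeasurable χ μ) (hα : AEMeasurable α μ)
    (hmem : ∀ᵐ u ∂μ, α u ∈ A) :
    AEStronglyMeasurable (fun u => G (χ u) (α u)) μ := by
  have hpm : AEMeasurable (fun u => ((χ u, α u) : EuclideanSpace ℝ (Fin n) × EuclideanSpace ℝ (Fin m))) μ := AEMeasurable.prodMk hχ hα
  have hS : MeasurableSet ((Set.univ : Set (EuclideanSpace ℝ (Fin n))) ×ˢ A) := MeasurableSet.univ.prod hA.measurableSet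
  have hae : ∀ᵐ p ∂(μ.map (fun u => (χ u, α u))), p ∈ (Set.univ : Set (EuclideanSpace ℝ (Fin n))) ×ˢ A :=
    (MeasureTheory.ae_map_iff hpm hS).2 (by filter_upwards [hmem] with u hu using ⟨mem_univ _, hu⟩)
  have h2 : AEMeasurable (fun p : EuclideanSpace ℝ (Fin n) × EuclideanSpace ℝ (Fin m) => G p.1 p.2)
      ((μ.map (fun u => (χ u, α u))).restrict (Set.univ ×ˢ A)) := hG.aemeasurable hS
  rw [Measure.restrict_eq_self_of_ae_mem hae] at h2
  exact (h2.comp_aemeasurable hpm).aestronglyMeasurable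

lemma intInt_comp {A : Set (EuclideanSpace ℝ (Fin m))} (hA : IsClosed A)
    {G : EuclideanSpace ℝ (Fin n) → EuclideanSpace ℝ (Fin m) → EuclideanSpace ℝ (Fin k)}
    (hG : ContinuousOn (fun p => G p.1 p.2) (Set.univ ×ˢ A))
    {C : ℝ} (hbd : ∀ x, ∀ a ∈ A, ‖G x a‖ ≤ C)
    {χ : ℝ → EuclideanSpace ℝ (Fin n)} {α : ℝ → EuclideanSpace ℝ (Fin m)}
    {p q : ℝ} (hpq : p ≤ q)
    (hχ : AEMeasurable χ (volume.restrict (Set.Ioc p q)))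
    (hα : AEMeasurable α (volume.restrict (Set.Ioc p q)))
    (hmem : ∀ᵐ u ∂(volume.restrict (Set.Ioc p q)), α u ∈ A) :
    IntervalIntegrable (fun u => G (χ u) (α u)) volume p q := by
  rw [intervalIntegrable_iff_integrableOn_Ioc_of_le hpq]
  have hsm := aesm_comp hA hG hχ hα hmem
  refine Integrable.mono' (g := fun _ => C) ?_ hsm ?_
  · exact integrableOn_const measure_Ioc_lt_top.ne
  · filter_upwards [hmem] with u hu using hbd _ _ hu

lemma exists_traj {n m : ℕ} {T C : ℝ} (hC : 0 < C)
    {A : Set (EuclideanSpace ℝ (Fin m))}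
    {F : EuclideanSpace ℝ (Fin n) → EuclideanSpace ℝ (Fin m) → EuclideanSpace ℝ (Fin n)}
    (hFcont : ContinuousOn (fun p => F p.1 p.2) (Set.univ ×ˢ A))
    (hFbd : ∀ x, ∀ a ∈ A, ‖F x a‖ ≤ C)
    (hFlip : ∀ x y, ∀ a ∈ A, ‖F x a - F y a‖ ≤ C * ‖x - y‖)
    {a : EuclideanSpace ℝ (Fin m)} (ha : a ∈ A)
    (x : EuclideanSpace ℝ (Fin n)) {t : ℝ} (ht : t ≤ T) :
    ∃ χ : ℝ → EuclideanSpace ℝ (Fin n), Continuous χ ∧ χ t = x ∧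
      (∀ s ∈ Set.Icc t T, HasDerivWithinAt χ (F (χ s) a) (Set.Icc t T) s) ∧
      IsTrajectory T F x t (fun _ => a) χ := by
  have hFa : Continuous (fun y => F y a) := cont_apply hFcont ha
  -- Picard–Lindelöf
  have hlip : LipschitzWith C.toNNReal (fun y => F y a) := by
    apply LipschitzWith.of_dist_le_mul
    intro p q
    rw [dist_eq_norm, dist_eq_norm, Real.coe_toNNReal C hC.le]
    exact hFlip p q a ha
  have hpl : IsPicardLindelof (fun _ y => F y a) (tmin := t) (tmax := T) ⟨t, le_refl t, ht⟩ x
      (C * (T - t)).toNNReal 0 C.toNNReal C.toNNReal :=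
    { lipschitzOnWith := fun _ _ => hlip.lipschitzOnWith
      continuousOn := fun _ _ => continuousOn_const
      norm_le := fun _ _ y _ => by rw [Real.coe_toNNReal C hC.le]; exact hFbd y a ha
      mul_max_le := by
        have : max (T - t) (t - t) = T - t := by
          rw [max_eq_left]; simp [sub_nonneg.2 ht]
        show (C.toNNReal : ℝ) * max (T - t) (t - t) ≤ ((C * (T - t)).toNNReal : ℝ) - ((0 : NNReal) : ℝ)
        rw [this, Real.coe_toNNReal C hC.le,
          Real.coe_toNNReal _ (mul_nonneg hC.le (sub_nonneg.2 ht))]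
        simp }
  obtain ⟨f, hf0, hfd⟩ := hpl.exists_eq_forall_mem_Icc_hasDerivWithinAt₀
  -- clamp
  set π : ℝ → ℝ := fun u => max t (min u T) with hπ
  have hπc : Continuous π := continuous_const.max (continuous_id.min continuous_const)
  have hπmem : ∀ u, π u ∈ Set.Icc t T := fun u =>
    ⟨le_max_left _ _, max_le (by simpa using ht) (min_le_right _ _)⟩
  have hπid : ∀ u ∈ Set.Icc t T, π u = u := fun u hu => by
    simp only [hπ]; rw [min_eq_left hu.2, max_eq_right hu.1]
  have hfc : ContinuousOn f (Set.Icc t T) := fun s hs =>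
    (hfd s hs).continuousWithinAt
  set χ : ℝ → EuclideanSpace ℝ (Fin n) := fun u => f (π u) with hχdef
  have hχc : Continuous χ := hfc.comp_continuous hπc hπmem
  have hχeq : ∀ u ∈ Set.Icc t T, χ u = f u := fun u hu => by
    simp only [hχdef]; rw [hπid u hu]
  have hχt : χ t = x := by rw [hχeq t ⟨le_refl t, ht⟩]; exact hf0
  have hχd : ∀ s ∈ Set.Icc t T, HasDerivWithinAt χ (F (χ s) a) (Set.Icc t T) s := by
    intro s hs
    have h1 := (hfd s hs).congr (fun u hu => hχeq u hu) (hχeq s hs)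
    rwa [← hχeq s hs] at h1
  refine ⟨χ, hχc, hχt, hχd, hχc.continuousOn, ?_⟩
  intro s hs
  have hts : t ≤ s := hs.1
  have hint : ∫ r in t..s, F (χ r) a = χ s - χ t := by
    apply intervalIntegral.integral_eq_sub_of_hasDeriv_right_of_le hts
      (hχc.continuousOn)
      (fun r hr => ?_) ((hFa.comp hχc).intervalIntegrable t s)
    have hmem : Set.Icc t T ∈ nhdsWithin r (Set.Ioi r) :=
      Icc_mem_nhdsGT_of_mem ⟨hr.1.le, lt_of_lt_of_le hr.2 hs.2⟩
    exact (hχd r ⟨hr.1.le, hr.2.le.trans hs.2⟩).mono_of_mem_nhdsWithin hmem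
  rw [hint, hχt]
  abel

lemma lower_bound_mem {n m N : ℕ} {T C : ℝ} (hC : 0 < C) (hT : 0 < T)
    {A : Set (EuclideanSpace ℝ (Fin m))}
    {F : EuclideanSpace ℝ (Fin n) → EuclideanSpace ℝ (Fin m) → EuclideanSpace ℝ (Fin n)}
    {h : EuclideanSpace ℝ (Fin n) → EuclideanSpace ℝ (Fin m) → EuclideanSpace ℝ (Fin N)}
    {g : EuclideanSpace ℝ (Fin n) → EuclideanSpace ℝ (Fin N)}
    (hhbd : ∀ x, ∀ a ∈ A, ‖h x a‖ ≤ C) (hgbd : ∀ x, ‖g x‖ ≤ C)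
    (lam : EuclideanSpace ℝ (Fin N))
    {x : EuclideanSpace ℝ (Fin n)} {t : ℝ} (ht0 : 0 ≤ t) (htT : t ≤ T)
    {r : ℝ}
    (hr : r ∈ {r : ℝ | ∃ (α : ℝ → EuclideanSpace ℝ (Fin m)) (χ : ℝ → EuclideanSpace ℝ (Fin n)),
      IsAdmissible T A α ∧ IsTrajectory T F x t α χ ∧ r = ⟪lam, vectCost T h g t α χ⟫_ℝ}) :
    -(‖lam‖ * (C + C * T)) ≤ r := by
  obtain ⟨α, χ, hadm, htraj, rfl⟩ := hr
  have hmem : ∀ᵐ s : ℝ, s ∈ Set.Ioo (0:ℝ) T → α s ∈ A :=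
    (ae_restrict_iff' measurableSet_Ioo).1 hadm.2
  have hneT : ∀ᵐ s : ℝ, s ∉ ({T} : Set ℝ) :=
    measure_eq_zero_iff_ae_notMem.mp Real.volume_singleton
  have hbd : ‖∫ s in t..T, h (χ s) (α s)‖ ≤ C * |T - t| := by
    apply intervalIntegral.norm_integral_le_of_norm_le_const_ae
    filter_upwards [hmem, hneT] with s hs hsT hsm
    rw [Set.uIoc_of_le htT] at hsm
    have : s ∈ Set.Ioo (0:ℝ) T :=
      ⟨lt_of_le_of_lt ht0 hsm.1, lt_of_le_of_ne hsm.2 (by simpa using hsT)⟩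
    exact hhbd _ _ (hs this)
  have hcost : ‖vectCost T h g t α χ‖ ≤ C + C * T := by
    refine (norm_add_le _ _).trans (add_le_add (hgbd _) (hbd.trans ?_))
    have : |T - t| ≤ T := by rw [abs_of_nonneg (sub_nonneg.2 htT)]; linarith
    exact mul_le_mul_of_nonneg_left this hC.le
  have h1 : |⟪lam, vectCost T h g t α χ⟫_ℝ| ≤ ‖lam‖ * (C + C * T) :=
    (abs_real_inner_le_norm _ _).trans
      (mul_le_mul_of_nonneg_left hcost (norm_nonneg _))
  linarith [neg_abs_le (⟪lam, vectCost T h g t α χ⟫_ℝ), h1]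

lemma const_admissible {m : ℕ} {T : ℝ} {A : Set (EuclideanSpace ℝ (Fin m))}
    {a : EuclideanSpace ℝ (Fin m)} (ha : a ∈ A) :
    IsAdmissible T A (fun _ => a) :=
  ⟨measurable_const, Filter.Eventually.of_forall fun _ => ha⟩

lemma dpp {n m N : ℕ} {T C : ℝ} (hC : 0 < C) (hT : 0 < T)
    {A : Set (EuclideanSpace ℝ (Fin m))} (hAcl : IsClosed A)
    {F : EuclideanSpace ℝ (Fin n) → EuclideanSpace ℝ (Fin m) → EuclideanSpace ℝ (Fin n)}
    {h : EuclideanSpace ℝ (Fin n) → EuclideanSpace ℝ (Fin m) → EuclideanSpace ℝ (Fin N)}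
    {g : EuclideanSpace ℝ (Fin n) → EuclideanSpace ℝ (Fin N)}
    (hFcont : ContinuousOn (fun p => F p.1 p.2) (Set.univ ×ˢ A))
    (hhcont : ContinuousOn (fun p => h p.1 p.2) (Set.univ ×ˢ A))
    (hFbd : ∀ x, ∀ a ∈ A, ‖F x a‖ ≤ C)
    (hhbd : ∀ x, ∀ a ∈ A, ‖h x a‖ ≤ C)
    (hgbd : ∀ x, ‖g x‖ ≤ C)
    (hFlip : ∀ x y, ∀ a ∈ A, ‖F x a - F y a‖ ≤ C * ‖x - y‖)
    (lam : EuclideanSpace ℝ (Fin N))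
    {x₀ : EuclideanSpace ℝ (Fin n)} {t₀ s : ℝ}
    (h0 : 0 < t₀) (hts : t₀ < s) (hsT : s < T)
    {a : EuclideanSpace ℝ (Fin m)} (ha : a ∈ A)
    {χ : ℝ → EuclideanSpace ℝ (Fin n)} (hχ : Continuous χ)
    (hχtraj : IsTrajectory T F x₀ t₀ (fun _ => a) χ) :
    scalarValue T A F h g lam x₀ t₀ ≤
      (∫ u in t₀..s, ⟪lam, h (χ u) a⟫_ℝ) + scalarValue T A F h g lam (χ s) s := by
  refine le_of_forall_pos_le_add fun η hη => ?_
  -- nonemptiness of the value set at (χ s, s)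
  obtain ⟨χ₁, hχ₁c, _, _, hχ₁traj⟩ := exists_traj hC hFcont hFbd hFlip ha (χ s) hsT.le
  have hS2ne : {r : ℝ | ∃ (α : ℝ → EuclideanSpace ℝ (Fin m)) (χ' : ℝ → EuclideanSpace ℝ (Fin n)),
      IsAdmissible T A α ∧ IsTrajectory T F (χ s) s α χ' ∧
        r = ⟪lam, vectCost T h g s α χ'⟫_ℝ}.Nonempty :=
    ⟨_, (fun _ => a), χ₁, const_admissible ha, hχ₁traj, rfl⟩
  obtain ⟨r', ⟨α', χ', hadm', htraj', hr'eq⟩, hr'lt⟩ :=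
    Real.lt_sInf_add_pos hS2ne hη
  -- glued control and trajectory
  set α'' : ℝ → EuclideanSpace ℝ (Fin m) := fun u => if s ≤ u then α' u else a with hα''def
  set π : ℝ → ℝ := fun u => max s (min u T) with hπ
  have hπc : Continuous π := continuous_const.max (continuous_id.min continuous_const)
  have hπmem : ∀ u, π u ∈ Set.Icc s T := fun u =>
    ⟨le_max_left _ _, max_le (by simpa using hsT.le) (min_le_right _ _)⟩
  have hπid : ∀ u ∈ Set.Icc s T, π u = u := fun u hu => by
    simp only [hπ]; rw [min_eq_left hu.2, max_eq_right hu.1]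
  set χ'c : ℝ → EuclideanSpace ℝ (Fin n) := fun u => χ' (π u) with hχ'cdef
  have hχ'cc : Continuous χ'c := htraj'.1.comp_continuous hπc hπmem
  have hχ'ceq : ∀ u ∈ Set.Icc s T, χ'c u = χ' u := fun u hu => by
    simp only [hχ'cdef]; rw [hπid u hu]
  set χ'' : ℝ → EuclideanSpace ℝ (Fin n) := fun u => if s ≤ u then χ'c u else χ u with hχ''def
  have hχ's : χ' s = χ s := by
    have := htraj'.2 s ⟨le_refl s, hsT.le⟩
    simpa using this
  have hχ'cs : χ'c s = χ s := by rw [hχ'ceq s ⟨le_refl s, hsT.le⟩, hχ's]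
  have hχ''le : ∀ u ≤ s, χ'' u = χ u := by
    intro u hu
    simp only [hχ''def]
    by_cases hsu : s ≤ u
    · have huu : u = s := le_antisymm hu hsu
      simp [huu, hχ'cs]
    · simp [hsu]
  have hχ''ge : ∀ u, s ≤ u → u ≤ T → χ'' u = χ' u := fun u hu huT => by
    simp only [hχ''def, if_pos hu]; exact hχ'ceq u ⟨hu, huT⟩
  have hα''lt : ∀ u, u < s → α'' u = a := fun u hu => by
    simp only [hα''def, if_neg (not_le.2 hu)]
  have hα''ge : ∀ u, s ≤ u → α'' u = α' u := fun u hu => by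
    simp only [hα''def, if_pos hu]
  -- admissibility of the glued control
  have hadm'' : IsAdmissible T A α'' := by
    constructor
    · exact Measurable.ite measurableSet_Ici hadm'.1 measurable_const
    · filter_upwards [hadm'.2] with u hu
      by_cases hsu : s ≤ u
      · rw [hα''ge u hsu]; exact hu
      · rw [hα''lt u (not_le.1 hsu)]; exact ha
  have hχ''c : Continuous χ'' := by
    apply continuous_if_le continuous_const continuous_id hχ'cc.continuousOn
      hχ.continuousOn
    intro u hu
    have huu : u = s := by simpa using hu.symm
    rw [huu, hχ'cs]
  -- a.e. membership facts
  have hnes : ∀ᵐ u : ℝ, u ∉ ({s} : Set ℝ) :=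
    measure_eq_zero_iff_ae_notMem.mp Real.volume_singleton
  have hneT : ∀ᵐ u : ℝ, u ∉ ({T} : Set ℝ) :=
    measure_eq_zero_iff_ae_notMem.mp Real.volume_singleton
  have hmemA' : ∀ᵐ u : ℝ, u ∈ Set.Ioo (0:ℝ) T → α' u ∈ A :=
    (ae_restrict_iff' measurableSet_Ioo).1 hadm'.2
  have Hmem1 : ∀ᵐ u ∂(volume.restrict (Set.Ioc t₀ s)), α'' u ∈ A := by
    filter_upwards [ae_restrict_mem measurableSet_Ioc, ae_restrict_of_ae hnes] with u hu hus
    have : u < s := lt_of_le_of_ne hu.2 (by simpa using hus)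
    rw [hα''lt u this]; exact ha
  have Hmem2 : ∀ᵐ u ∂(volume.restrict (Set.Ioc s T)), α'' u ∈ A := by
    filter_upwards [ae_restrict_mem measurableSet_Ioc, ae_restrict_of_ae hneT,
      ae_restrict_of_ae hmemA'] with u hu huT hA'
    rw [hα''ge u hu.1.le]
    exact hA' ⟨lt_trans (lt_trans h0 hts) hu.1, lt_of_le_of_ne hu.2 (by simpa using huT)⟩
  have hα''m : Measurable α'' := Measurable.ite measurableSet_Ici hadm'.1 measurable_const
  -- integrability of the glued integrands
  have HF1 : IntervalIntegrable (fun u => F (χ'' u) (α'' u)) volume t₀ s :=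
    intInt_comp hAcl hFcont hFbd hts.le hχ''c.aemeasurable.restrict
      hα''m.aemeasurable.restrict Hmem1
  have HF2 : IntervalIntegrable (fun u => F (χ'' u) (α'' u)) volume s T :=
    intInt_comp hAcl hFcont hFbd hsT.le hχ''c.aemeasurable.restrict
      hα''m.aemeasurable.restrict Hmem2
  have Hh1 : IntervalIntegrable (fun u => h (χ'' u) (α'' u)) volume t₀ s :=
    intInt_comp hAcl hhcont hhbd hts.le hχ''c.aemeasurable.restrict
      hα''m.aemeasurable.restrict Hmem1
  have Hh2 : IntervalIntegrable (fun u => h (χ'' u) (α'' u)) volume s T :=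
    intInt_comp hAcl hhcont hhbd hsT.le hχ''c.aemeasurable.restrict
      hα''m.aemeasurable.restrict Hmem2
  -- congruence of integrands on [t₀,s]
  have hcongrF : ∀ r, t₀ ≤ r → r ≤ s →
      (∫ u in t₀..r, F (χ'' u) (α'' u)) = ∫ u in t₀..r, F (χ u) a := by
    intro r htr hrs
    apply intervalIntegral.integral_congr_ae
    filter_upwards [hnes] with u hus hu
    rw [Set.uIoc_of_le htr] at hu
    have : u < s := lt_of_le_of_ne (hu.2.trans hrs) (by simpa using hus)
    rw [hχ''le u this.le, hα''lt u this]
  have hcongr1h : ∫ u in t₀..s, h (χ'' u) (α'' u) = ∫ u in t₀..s, h (χ u) a := by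
    apply intervalIntegral.integral_congr_ae
    filter_upwards [hnes] with u hus hu
    rw [Set.uIoc_of_le hts.le] at hu
    have : u < s := lt_of_le_of_ne hu.2 (by simpa using hus)
    rw [hχ''le u this.le, hα''lt u this]
  -- glued trajectory
  have htraj'' : IsTrajectory T F x₀ t₀ α'' χ'' := by
    refine ⟨hχ''c.continuousOn, fun r hr => ?_⟩
    rcases le_or_gt r s with hrs | hrs
    · rw [hχ''le r hrs, hχtraj.2 r hr]
      congr 1
      exact (hcongrF r hr.1 hrs).symm
    · have hrT : r ≤ T := hr.2
      rw [hχ''ge r hrs.le hrT]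
      have hsub : Set.uIcc s r ⊆ Set.uIcc s T := by
        rw [Set.uIcc_of_le hrs.le, Set.uIcc_of_le hsT.le]
        exact Set.Icc_subset_Icc le_rfl hrT
      have hsplit : (∫ u in t₀..r, F (χ'' u) (α'' u))
          = (∫ u in t₀..s, F (χ'' u) (α'' u)) + ∫ u in s..r, F (χ'' u) (α'' u) :=
        (intervalIntegral.integral_add_adjacent_intervals HF1
          (HF2.mono_set hsub)).symm
      have h2 : (∫ u in s..r, F (χ'' u) (α'' u)) = ∫ u in s..r, F (χ' u) (α' u) := by
        apply intervalIntegral.integral_congr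
        intro u hu
        rw [Set.uIcc_of_le hrs.le] at hu
        show F (χ'' u) (α'' u) = F (χ' u) (α' u)
        rw [hχ''ge u hu.1 (hu.2.trans hrT), hα''ge u hu.1]
      have h1 : (∫ u in t₀..s, F (χ'' u) (α'' u)) = χ s - x₀ := by
        rw [hcongrF s hts.le le_rfl]
        have := hχtraj.2 s ⟨hts.le, hsT.le⟩
        simp only at this
        rw [this]; abel
      rw [htraj'.2 r ⟨hrs.le, hrT⟩, hsplit, h1, h2]
      abel
  -- the glued cost decomposes
  have hcostT : χ'' T = χ' T := hχ''ge T hsT.le le_rfl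
  have hsplith : (∫ u in t₀..T, h (χ'' u) (α'' u))
      = (∫ u in t₀..s, h (χ'' u) (α'' u)) + ∫ u in s..T, h (χ'' u) (α'' u) :=
    (intervalIntegral.integral_add_adjacent_intervals Hh1 Hh2).symm
  have h2h : (∫ u in s..T, h (χ'' u) (α'' u)) = ∫ u in s..T, h (χ' u) (α' u) := by
    apply intervalIntegral.integral_congr
    intro u hu
    rw [Set.uIcc_of_le hsT.le] at hu
    show h (χ'' u) (α'' u) = h (χ' u) (α' u)
    rw [hχ''ge u hu.1 hu.2, hα''ge u hu.1]
  have hcosteq : vectCost T h g t₀ α'' χ''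
      = (∫ u in t₀..s, h (χ u) a) + vectCost T h g s α' χ' := by
    unfold vectCost
    rw [hcostT, hsplith, h2h, hcongr1h]
    abel
  -- scalar cost splits
  have hinner : ⟪lam, (∫ u in t₀..s, h (χ u) a)⟫_ℝ = ∫ u in t₀..s, ⟪lam, h (χ u) a⟫_ℝ := by
    rw [intervalIntegral.integral_of_le hts.le, intervalIntegral.integral_of_le hts.le]
    exact (integral_inner (((cont_apply hhcont ha).comp hχ).integrableOn_Ioc) lam).symm
  -- conclude
  have hbdd : BddBelow {r : ℝ | ∃ (α : ℝ → EuclideanSpace ℝ (Fin m))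
      (χ : ℝ → EuclideanSpace ℝ (Fin n)),
      IsAdmissible T A α ∧ IsTrajectory T F x₀ t₀ α χ ∧ r = ⟪lam, vectCost T h g t₀ α χ⟫_ℝ} :=
    ⟨-(‖lam‖ * (C + C * T)), fun r hr =>
      lower_bound_mem hC hT hhbd hgbd lam h0.le (hts.le.trans hsT.le) hr⟩
  have hmem'' : (⟪lam, vectCost T h g t₀ α'' χ''⟫_ℝ) ∈ {r : ℝ | ∃ (α : ℝ → EuclideanSpace ℝ (Fin m))
      (χ : ℝ → EuclideanSpace ℝ (Fin n)),
      IsAdmissible T A α ∧ IsTrajectory T F x₀ t₀ α χ ∧ r = ⟪lam, vectCost T h g t₀ α χ⟫_ℝ} :=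
    ⟨α'', χ'', hadm'', htraj'', rfl⟩
  have hle : scalarValue T A F h g lam x₀ t₀ ≤ ⟪lam, vectCost T h g t₀ α'' χ''⟫_ℝ :=
    csInf_le hbdd hmem''
  have heq2 : ⟪lam, vectCost T h g t₀ α'' χ''⟫_ℝ
      = (∫ u in t₀..s, ⟪lam, h (χ u) a⟫_ℝ) + r' := by
    rw [hcosteq, inner_add_right, hinner, hr'eq]
  rw [heq2] at hle
  refine hle.trans ?_
  have : r' ≤ scalarValue T A F h g lam (χ s) s + η := le_of_lt hr'lt
  unfold scalarValue
  linarith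

/-- The scalar value function `v^λ` is a viscosity subsolution of
`v_t + H^λ(x, Dv) = 0` in `ℝ^n × (0,T)`, with
`H^λ(x,p) = min_{a ∈ A} {F(x,a)·p + λ·h(x,a)}`: whenever a `C²` test function `ψ`
touches `v^λ` from above at an interior maximum point `(x₀,t₀)` of `v^λ - ψ`, we have
`∂_t ψ(x₀,t₀) + min_{a ∈ A} {F(x₀,a)·D_xψ(x₀,t₀) + λ·h(x₀,a)} ≥ 0`. -/
theorem value_function_viscosity_subsolution
    (n m N : ℕ) (T : ℝ) (hT : 0 < T)
    (A : Set (EuclideanSpace ℝ (Fin m))) (hAne : A.Nonempty) (hAcpt : IsCompact A)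
    (F : EuclideanSpace ℝ (Fin n) → EuclideanSpace ℝ (Fin m) → EuclideanSpace ℝ (Fin n))
    (h : EuclideanSpace ℝ (Fin n) → EuclideanSpace ℝ (Fin m) → EuclideanSpace ℝ (Fin N))
    (g : EuclideanSpace ℝ (Fin n) → EuclideanSpace ℝ (Fin N))
    (hFcont : ContinuousOn (fun p => F p.1 p.2) (Set.univ ×ˢ A))
    (hhcont : ContinuousOn (fun p => h p.1 p.2) (Set.univ ×ˢ A))
    (hgcont : Continuous g)
    (C : ℝ) (hCpos : 0 < C)
    (hFbd : ∀ x, ∀ a ∈ A, ‖F x a‖ ≤ C)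
    (hhbd : ∀ x, ∀ a ∈ A, ‖h x a‖ ≤ C)
    (hgbd : ∀ x, ‖g x‖ ≤ C)
    (hFlip : ∀ x y, ∀ a ∈ A, ‖F x a - F y a‖ ≤ C * ‖x - y‖)
    (hhlip : ∀ x y, ∀ a ∈ A, ‖h x a - h y a‖ ≤ C * ‖x - y‖)
    (hglip : ∀ x y, ‖g x - g y‖ ≤ C * ‖x - y‖)
    (lam : EuclideanSpace ℝ (Fin N))
    (ψ : EuclideanSpace ℝ (Fin n) × ℝ → ℝ) (hψ : ContDiff ℝ 2 ψ)
    (x₀ : EuclideanSpace ℝ (Fin n)) (t₀ : ℝ) (ht₀ : t₀ ∈ Set.Ioo (0:ℝ) T)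
    (ε : ℝ) (hε : 0 < ε)
    (htouch : ∀ p : EuclideanSpace ℝ (Fin n) × ℝ, dist p (x₀, t₀) < ε →
      scalarValue T A F h g lam p.1 p.2 - ψ p ≤ 0)
    (heq : scalarValue T A F h g lam x₀ t₀ - ψ (x₀, t₀) = 0) :
    0 ≤ deriv (fun τ => ψ (x₀, τ)) t₀ +
        sInf {r : ℝ | ∃ a ∈ A,
          r = ⟪F x₀ a, gradient (fun y => ψ (y, t₀)) x₀⟫_ℝ + ⟪lam, h x₀ a⟫_ℝ} := by
  obtain ⟨ht0, htT⟩ := ht₀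
  have hAcl : IsClosed A := hAcpt.isClosed
  have hψd : Differentiable ℝ ψ := hψ.differentiable (by norm_num)
  set Dψ : (EuclideanSpace ℝ (Fin n) × ℝ) →L[ℝ] ℝ := fderiv ℝ ψ (x₀, t₀) with hDψ
  have hveq : scalarValue T A F h g lam x₀ t₀ = ψ (x₀, t₀) := sub_eq_zero.1 heq
  -- time derivative identity
  have htime : deriv (fun τ => ψ (x₀, τ)) t₀ = Dψ (0, 1) := by
    have hcurve : HasDerivAt (fun τ : ℝ => ((x₀, τ) : EuclideanSpace ℝ (Fin n) × ℝ))
        ((0, 1) : EuclideanSpace ℝ (Fin n) × ℝ) t₀ :=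
      (hasDerivAt_const t₀ x₀).prodMk (hasDerivAt_id t₀)
    exact ((hψd (x₀, t₀)).hasFDerivAt.comp_hasDerivAt t₀ hcurve).deriv
  -- gradient identity
  have hgrad : ∀ v : EuclideanSpace ℝ (Fin n),
      ⟪v, gradient (fun y => ψ (y, t₀)) x₀⟫_ℝ = Dψ (v, 0) := by
    intro v
    have hφ : HasFDerivAt (fun y => ψ (y, t₀))
        (Dψ.comp (ContinuousLinearMap.inl ℝ (EuclideanSpace ℝ (Fin n)) ℝ)) x₀ :=
      (hψd (x₀, t₀)).hasFDerivAt.comp x₀ (hasFDerivAt_prodMk_left x₀ t₀)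
    have hg := (hasFDerivAt_iff_hasGradientAt.1 hφ).gradient
    rw [hg, real_inner_comm, InnerProductSpace.toDual_symm_apply]
    rfl
  -- key step: the Hamiltonian inequality for each control value
  have key : ∀ a ∈ A, 0 ≤ Dψ (0, 1) + (Dψ (F x₀ a, 0) + ⟪lam, h x₀ a⟫_ℝ) := by
    intro a ha
    obtain ⟨χ, hχc, hχt, hχd, hχtraj⟩ := exists_traj hCpos hFcont hFbd hFlip ha x₀ htT.le
    set q : ℝ → ℝ := fun u => ⟪lam, h (χ u) a⟫_ℝ with hq
    have hqc : Continuous q := continuous_const.inner ((cont_apply hhcont ha).comp hχc)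
    set Iq : ℝ → ℝ := fun τ => ∫ u in t₀..τ, q u with hIq
    set Φ : ℝ → ℝ := fun τ => ψ (χ τ, τ) with hΦ
    set δ : ℝ := min ((T - t₀)/2) (ε / (2*(C+1))) with hδ
    have hδpos : 0 < δ := lt_min (by linarith) (by positivity)
    have hδT : t₀ + δ < T := by
      have : δ ≤ (T - t₀)/2 := min_le_left _ _
      linarith
    -- the key integral inequality
    have KI : ∀ s ∈ Set.Ioc t₀ (t₀ + δ), Φ t₀ ≤ Iq s + Φ s := by
      intro s hs
      have hsT' : s < T := lt_of_le_of_lt hs.2 hδT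
      have hdist : dist ((χ s, s) : EuclideanSpace ℝ (Fin n) × ℝ) (x₀, t₀) < ε := by
        rw [Prod.dist_eq]
        have hnorm : ‖χ s - x₀‖ ≤ C * (s - t₀) := by
          have hint := hχtraj.2 s ⟨hs.1.le, hsT'.le⟩
          have : χ s - x₀ = ∫ r in t₀..s, F (χ r) a := by rw [hint]; abel
          rw [this]
          calc ‖∫ r in t₀..s, F (χ r) a‖ ≤ C * |s - t₀| :=
                intervalIntegral.norm_integral_le_of_norm_le_const
                  (fun u _ => hFbd (χ u) a ha)
            _ = C * (s - t₀) := by rw [abs_of_nonneg (by linarith [hs.1.le])]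
        have hsd : s - t₀ ≤ δ := by linarith [hs.2]
        have hδε : δ ≤ ε / (2*(C+1)) := min_le_right _ _
        have h1 : dist (χ s) x₀ < ε := by
          rw [dist_eq_norm]
          have : C * (s - t₀) ≤ C * (ε / (2*(C+1))) :=
            mul_le_mul_of_nonneg_left (hsd.trans hδε) hCpos.le
          have hlt : C * (ε / (2*(C+1))) < ε := by
            have h2C : C < 2*(C+1) := by linarith
            calc C * (ε / (2*(C+1))) = ε * (C / (2*(C+1))) := by ring
              _ < ε * 1 := by
                  refine mul_lt_mul_of_pos_left ?_ hε
                  rw [div_lt_one (by positivity)]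
                  exact h2C
              _ = ε := mul_one ε
          linarith
        have h2 : dist s t₀ < ε := by
          rw [Real.dist_eq, abs_of_nonneg (by linarith [hs.1.le] : (0:ℝ) ≤ s - t₀)]
          have hlt2 : ε / (2*(C+1)) < ε := div_lt_self hε (by linarith)
          linarith [hs.2, hδε]
        exact max_lt h1 h2
      have hdpp := dpp hCpos hT hAcl hFcont hhcont hFbd hhbd hgbd hFlip lam
        ht0 hs.1 hsT' ha hχc hχtraj
      have h2 := htouch (χ s, s) hdist
      simp only at h2
      have : scalarValue T A F h g lam (χ s) s ≤ Φ s := by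
        simpa [hΦ] using h2
      calc Φ t₀ = ψ (x₀, t₀) := by simp only [hΦ, hχt]
        _ = scalarValue T A F h g lam x₀ t₀ := hveq.symm
        _ ≤ Iq s + scalarValue T A F h g lam (χ s) s := hdpp
        _ ≤ Iq s + Φ s := by linarith
    -- derivatives
    have hγ : HasDerivWithinAt (fun τ : ℝ => ((χ τ, τ) : EuclideanSpace ℝ (Fin n) × ℝ))
        ((F x₀ a, 1) : EuclideanSpace ℝ (Fin n) × ℝ) (Set.Icc t₀ T) t₀ := by
      have h1 := hχd t₀ ⟨le_refl t₀, htT.le⟩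
      rw [hχt] at h1
      exact h1.prodMk (hasDerivWithinAt_id t₀ _)
    have hΦd : HasDerivWithinAt Φ (Dψ (F x₀ a, 1)) (Set.Icc t₀ T) t₀ := by
      have hfd : HasFDerivAt ψ Dψ (χ t₀, t₀) := by
        rw [hχt]; exact (hψd (x₀, t₀)).hasFDerivAt
      exact hfd.comp_hasDerivWithinAt (f := fun τ => (χ τ, τ)) t₀ hγ
    have hId : HasDerivAt Iq (q t₀) t₀ :=
      (hqc.integral_hasStrictDerivAt t₀ t₀).hasDerivAt
    -- slope limits
    have hslopeΦ : Filter.Tendsto (slope Φ t₀) (nhdsWithin t₀ (Set.Ioi t₀))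
        (nhds (Dψ (F x₀ a, 1))) := by
      have := hasDerivWithinAt_iff_tendsto_slope.1 hΦd
      refine this.mono_left ?_
      rw [← nhdsWithin_Ioc_eq_nhdsGT htT]
      exact nhdsWithin_mono _ (fun u hu => ⟨⟨hu.1.le, hu.2⟩, ne_of_gt hu.1⟩)
    have hslopeI : Filter.Tendsto (slope Iq t₀) (nhdsWithin t₀ (Set.Ioi t₀))
        (nhds (q t₀)) := by
      have := hasDerivAt_iff_tendsto_slope.1 hId
      exact this.mono_left (nhdsWithin_mono _ (fun u hu => ne_of_gt hu))
    have hev : ∀ᶠ s in nhdsWithin t₀ (Set.Ioi t₀), 0 ≤ slope Iq t₀ s + slope Φ t₀ s := by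
      have hmemIoc : Set.Ioc t₀ (t₀ + δ) ∈ nhdsWithin t₀ (Set.Ioi t₀) :=
        Ioc_mem_nhdsGT_of_mem ⟨le_refl t₀, by linarith [hδpos]⟩
      filter_upwards [hmemIoc] with s hs
      have hKI := KI s hs
      have hpos : 0 < s - t₀ := by linarith [hs.1]
      rw [slope_def_field, slope_def_field]
      have hIqt : Iq t₀ = 0 := intervalIntegral.integral_same
      rw [hIqt]
      rw [← add_div]
      apply div_nonneg _ hpos.le
      linarith
    have hlim : 0 ≤ q t₀ + Dψ (F x₀ a, 1) :=
      ge_of_tendsto (hslopeI.add hslopeΦ) hev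
    have hqt : q t₀ = ⟪lam, h x₀ a⟫_ℝ := by rw [hq]; simp [hχt]
    have hDsum : Dψ (F x₀ a, 1) = Dψ (0, 1) + Dψ (F x₀ a, 0) := by
      rw [← ContinuousLinearMap.map_add]
      congr 1
      rw [Prod.mk_add_mk]
      simp
    rw [hqt, hDsum] at hlim
    linarith
  -- conclude via le_csInf
  obtain ⟨a₀, ha₀⟩ := hAne
  have hne : {r : ℝ | ∃ a ∈ A,
      r = ⟪F x₀ a, gradient (fun y => ψ (y, t₀)) x₀⟫_ℝ + ⟪lam, h x₀ a⟫_ℝ}.Nonempty :=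
    ⟨_, a₀, ha₀, rfl⟩
  have hlb : ∀ b ∈ {r : ℝ | ∃ a ∈ A,
      r = ⟪F x₀ a, gradient (fun y => ψ (y, t₀)) x₀⟫_ℝ + ⟪lam, h x₀ a⟫_ℝ},
      -(deriv (fun τ => ψ (x₀, τ)) t₀) ≤ b := by
    rintro b ⟨a, ha, rfl⟩
    have := key a ha
    rw [htime, hgrad (F x₀ a)]
    linarith
  have := le_csInf hne hlb
  linarith
end
end
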